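/- Define recursively m_{1,i} = d_{1,i}², and m_{ℓ,i} = d_{ℓ,i}²(m_{ℓ-1,1} + 1) for ℓ ≥ 2. Then for every d ≥ 1 and every i ≤ r, the i-th largest eigenvalue of (I_p - M_d)⁻¹ is at most m_{d,i} + 1, where M_d is the recursively defined matrix M_ℓ = W_ℓ(I + W_ℓᵀW_ℓ - M_{ℓ-1})⁻¹W_ℓᵀ (with M₀ = 0). Consequently Tr((I_p - M_d)⁻¹) ≤ p + Σ_{i=1}^r m_{d,i}. -/

import Mathlib

open Matrix

/-- The recursively defined matrices `M_ℓ = W_ℓ (I + W_ℓᵀ W_ℓ - M_{ℓ-1})⁻¹ W_ℓᵀ`, `M₀ = 0`. -/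
noncomputable def Mrec (p : ℕ) (W : ℕ → Matrix (Fin p) (Fin p) ℝ) : ℕ → Matrix (Fin p) (Fin p) ℝ
  | 0 => 0
  | (k + 1) => W (k + 1) * (1 + (W (k + 1))ᵀ * W (k + 1) - Mrec p W k)⁻¹ * (W (k + 1))ᵀ

/-- The recursively defined constants `m_{ℓ,i} = d_{ℓ,i}² (m_{ℓ-1,1} + 1)`, `m_{0,·} = 0`,
so that `m_{1,i} = d_{1,i}²`.  Here `dsv ℓ` lists the singular values of `W_ℓ` in
decreasing order, so `m_{ℓ-1,1}` is `mrec … (ℓ-1) ⟨0, hp⟩`. -/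
def mrec (p : ℕ) (hp : 0 < p) (dsv : ℕ → Fin p → ℝ) : ℕ → Fin p → ℝ
  | 0 => fun _ => 0
  | (k + 1) => fun i => dsv (k + 1) i ^ 2 * (mrec p hp dsv k ⟨0, hp⟩ + 1)

namespace EigProof


variable {p : ℕ}

/-- An orthonormal family as a matrix of rows. -/
lemma rowmat_mul_transpose {u : Fin p → Fin p → ℝ}
    (hu : ∀ j k, u j ⬝ᵥ u k = if j = k then 1 else 0) :
    (Matrix.of u) * (Matrix.of u)ᵀ = 1 := by
  ext j k
  simp [Matrix.mul_apply, Matrix.one_apply, ← hu j k, dotProduct]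

lemma transpose_mul_rowmat {u : Fin p → Fin p → ℝ}
    (hu : ∀ j k, u j ⬝ᵥ u k = if j = k then 1 else 0) :
    (Matrix.of u)ᵀ * (Matrix.of u) = 1 :=
  mul_eq_one_comm.mp (rowmat_mul_transpose hu)

lemma decomp {A : Matrix (Fin p) (Fin p) ℝ} {u : Fin p → Fin p → ℝ} {α : Fin p → ℝ}
    (hu : ∀ j k, u j ⬝ᵥ u k = if j = k then 1 else 0)
    (hAu : ∀ j, A *ᵥ u j = α j • u j) :
    A = (Matrix.of u)ᵀ * Matrix.diagonal α * (Matrix.of u) := by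
  have h1 : A * (Matrix.of u)ᵀ = (Matrix.of u)ᵀ * Matrix.diagonal α := by
    ext k j
    rw [Matrix.mul_diagonal]
    have := congrFun (hAu j) k
    simp only [Matrix.mulVec, dotProduct, Pi.smul_apply, smul_eq_mul] at this
    simp [Matrix.mul_apply, this, mul_comm]
  calc A = A * ((Matrix.of u)ᵀ * (Matrix.of u)) := by rw [transpose_mul_rowmat hu, mul_one]
    _ = (A * (Matrix.of u)ᵀ) * (Matrix.of u) := by rw [mul_assoc]
    _ = (Matrix.of u)ᵀ * Matrix.diagonal α * (Matrix.of u) := by rw [h1]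

lemma quad_eq {A : Matrix (Fin p) (Fin p) ℝ} {u : Fin p → Fin p → ℝ} {α : Fin p → ℝ}
    (hu : ∀ j k, u j ⬝ᵥ u k = if j = k then 1 else 0)
    (hAu : ∀ j, A *ᵥ u j = α j • u j) (x : Fin p → ℝ) :
    x ⬝ᵥ (A *ᵥ x) = ∑ j, α j * ((Matrix.of u) *ᵥ x) j ^ 2 := by
  conv_lhs => rw [decomp hu hAu]
  rw [← Matrix.mulVec_mulVec, ← Matrix.mulVec_mulVec, Matrix.dotProduct_mulVec,
    Matrix.vecMul_transpose]
  simp [dotProduct, Matrix.mulVec_diagonal, pow_two, mul_comm, mul_assoc, mul_left_comm]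

lemma norm_eq {u : Fin p → Fin p → ℝ}
    (hu : ∀ j k, u j ⬝ᵥ u k = if j = k then 1 else 0) (x : Fin p → ℝ) :
    x ⬝ᵥ x = ∑ j, ((Matrix.of u) *ᵥ x) j ^ 2 := by
  have h := quad_eq (A := 1) (α := fun _ => 1) hu (fun j => by simp) x
  simpa using h

/-- Rayleigh-type upper bound. -/
lemma quad_le {A : Matrix (Fin p) (Fin p) ℝ} {u : Fin p → Fin p → ℝ} {α : Fin p → ℝ}
    (hu : ∀ j k, u j ⬝ᵥ u k = if j = k then 1 else 0)
    (hAu : ∀ j, A *ᵥ u j = α j • u j) {t : ℝ} (ht : ∀ j, α j ≤ t) (x : Fin p → ℝ) :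
    x ⬝ᵥ (A *ᵥ x) ≤ t * (x ⬝ᵥ x) := by
  rw [quad_eq hu hAu, norm_eq hu, Finset.mul_sum]
  exact Finset.sum_le_sum fun j _ => mul_le_mul_of_nonneg_right (ht j) (sq_nonneg _)

lemma trace_eq {A : Matrix (Fin p) (Fin p) ℝ} {u : Fin p → Fin p → ℝ} {α : Fin p → ℝ}
    (hu : ∀ j k, u j ⬝ᵥ u k = if j = k then 1 else 0)
    (hAu : ∀ j, A *ᵥ u j = α j • u j) :
    Matrix.trace A = ∑ j, α j := by
  rw [decomp hu hAu, Matrix.trace_mul_comm, ← mul_assoc, rowmat_mul_transpose hu, one_mul,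
    Matrix.trace_diagonal]



lemma dv_sum {ι : Type} [Fintype ι] (v : Fin p → ℝ) (f : ι → Fin p → ℝ) :
    v ⬝ᵥ (∑ j, f j) = ∑ j, v ⬝ᵥ (f j) := by
  simp only [dotProduct, Finset.sum_apply, Finset.mul_sum]
  exact Finset.sum_comm

lemma sum_dv {ι : Type} [Fintype ι] (f : ι → Fin p → ℝ) (v : Fin p → ℝ) :
    (∑ j, f j) ⬝ᵥ v = ∑ j, (f j) ⬝ᵥ v := by
  simp only [dotProduct, Finset.sum_apply, Finset.sum_mul]
  exact Finset.sum_comm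

lemma quad_subfamily {A : Matrix (Fin p) (Fin p) ℝ} {u : Fin p → Fin p → ℝ} {α : Fin p → ℝ}
    (hu : ∀ j k, u j ⬝ᵥ u k = if j = k then 1 else 0)
    (hAu : ∀ j, A *ᵥ u j = α j • u j)
    {ι : Type} [Fintype ι] [DecidableEq ι] {e : ι → Fin p} (he : Function.Injective e)
    (c : ι → ℝ) :
    (∑ j, c j • u (e j)) ⬝ᵥ (A *ᵥ ∑ j, c j • u (e j)) = ∑ j, α (e j) * c j ^ 2 := by
  have hmv : A *ᵥ (∑ j, c j • u (e j)) = ∑ j, (c j * α (e j)) • u (e j) := by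
    rw [show A *ᵥ (∑ j, c j • u (e j)) = A.mulVecLin (∑ j, c j • u (e j)) from rfl, map_sum]
    refine Finset.sum_congr rfl fun j _ => ?_
    simp [Matrix.mulVecLin_apply, Matrix.mulVec_smul, hAu, smul_smul]
  rw [hmv, sum_dv]
  have : ∀ j, (c j • u (e j)) ⬝ᵥ (∑ k, (c k * α (e k)) • u (e k)) = c j ^ 2 * α (e j) := by
    intro j
    rw [dv_sum]
    have : ∀ k, (c j • u (e j)) ⬝ᵥ ((c k * α (e k)) • u (e k))
        = (c j * (c k * α (e k))) * if j = k then 1 else 0 := by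
      intro k
      rw [smul_dotProduct, dotProduct_smul, hu, smul_eq_mul, smul_eq_mul,
        ← mul_assoc]
      congr 1
      simp [he.eq_iff]
    simp only [this, mul_ite, mul_one, mul_zero, Finset.sum_ite_eq, Finset.mem_univ, if_true]
    ring
  rw [Finset.sum_congr rfl fun j _ => this j]
  exact Finset.sum_congr rfl fun j _ => by ring

lemma sum_sq_subfamily {u : Fin p → Fin p → ℝ}
    (hu : ∀ j k, u j ⬝ᵥ u k = if j = k then 1 else 0)
    {ι : Type} [Fintype ι] [DecidableEq ι] {e : ι → Fin p} (he : Function.Injective e)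
    (c : ι → ℝ) :
    (∑ j, c j • u (e j)) ⬝ᵥ (∑ j, c j • u (e j)) = ∑ j, c j ^ 2 := by
  have h := quad_subfamily (A := 1) (α := fun _ => 1) hu (fun j => by simp) he c
  simpa using h

lemma linindep {u : Fin p → Fin p → ℝ}
    (hu : ∀ j k, u j ⬝ᵥ u k = if j = k then 1 else 0) :
    LinearIndependent ℝ u := by
  rw [Fintype.linearIndependent_iff]
  intro g hg k
  have : (u k) ⬝ᵥ (∑ j, g j • u j) = g k := by
    rw [dv_sum]
    simp only [dotProduct_smul, hu, smul_eq_mul, mul_ite, mul_one, mul_zero]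
    simp [Finset.sum_ite_eq']
  rw [hg] at this
  simpa using this.symm

/-- The key eigenvalue comparison lemma (Weyl monotonicity). -/
lemma eig_mono {A B : Matrix (Fin p) (Fin p) ℝ} {u v : Fin p → Fin p → ℝ} {α β : Fin p → ℝ}
    (hu : ∀ j k, u j ⬝ᵥ u k = if j = k then 1 else 0)
    (hv : ∀ j k, v j ⬝ᵥ v k = if j = k then 1 else 0)
    (hAu : ∀ j, A *ᵥ u j = α j • u j)
    (hBv : ∀ j, B *ᵥ v j = β j • v j)
    (hα : Antitone α) (hβ : Antitone β)
    (hAB : ∀ x, x ⬝ᵥ (A *ᵥ x) ≤ x ⬝ᵥ (B *ᵥ x)) (i : Fin p) : α i ≤ β i := by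
  -- head family for u, tail family for v
  set e₁ : Fin ((i : ℕ) + 1) → Fin p := Fin.castLE i.isLt with he₁def
  have he₁ : Function.Injective e₁ := Fin.castLE_injective _
  have he₁le : ∀ j, e₁ j ≤ i := fun j => by
    simpa [he₁def, Fin.le_def, Fin.castLE] using Nat.lt_succ_iff.mp j.isLt
  have hisub : (i : ℕ) ≤ p := le_of_lt i.isLt
  set e₂ : Fin (p - (i : ℕ)) → Fin p := fun k =>
    ⟨(i : ℕ) + (k : ℕ), by omega⟩ with he₂def
  have he₂ : Function.Injective e₂ := by
    intro a b hab
    simp only [he₂def, Fin.mk.injEq] at hab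
    exact Fin.ext (by omega)
  have he₂ge : ∀ k, i ≤ e₂ k := fun k => by simp [he₂def, Fin.le_def]
  -- the two subspaces
  set V := Submodule.span ℝ (Set.range (u ∘ e₁)) with hV
  set Wm := Submodule.span ℝ (Set.range (v ∘ e₂)) with hW
  have hVrank : Module.finrank ℝ V = (i : ℕ) + 1 := by
    rw [hV, finrank_span_eq_card ((linindep hu).comp e₁ he₁)]
    simp
  have hWrank : Module.finrank ℝ Wm = p - (i : ℕ) := by
    rw [hW, finrank_span_eq_card ((linindep hv).comp e₂ he₂)]
    simp
  have hinf : V ⊓ Wm ≠ ⊥ := by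
    have hsum := Submodule.finrank_sup_add_finrank_inf_eq V Wm
    have hle : Module.finrank ℝ ↥(V ⊔ Wm) ≤ p := by
      have := Submodule.finrank_le (V ⊔ Wm)
      simpa [Module.finrank_pi] using this
    intro hbot
    rw [hbot] at hsum
    simp only [finrank_bot, add_zero] at hsum
    omega
  obtain ⟨x, hxmem, hxne⟩ := Submodule.exists_mem_ne_zero_of_ne_bot hinf
  obtain ⟨hxV, hxW⟩ := Submodule.mem_inf.mp hxmem
  obtain ⟨c, hc⟩ := (Submodule.mem_span_range_iff_exists_fun ℝ).mp hxV
  obtain ⟨dd, hdd⟩ := (Submodule.mem_span_range_iff_exists_fun ℝ).mp hxW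
  have hxx₁ : x ⬝ᵥ x = ∑ j, c j ^ 2 := by
    rw [← hc]; exact sum_sq_subfamily hu he₁ c
  have hxx₂ : x ⬝ᵥ x = ∑ k, dd k ^ 2 := by
    rw [← hdd]; exact sum_sq_subfamily hv he₂ dd
  have hpos : 0 < x ⬝ᵥ x := by
    rcases lt_or_eq_of_le (by rw [hxx₁]; exact Finset.sum_nonneg fun j _ => sq_nonneg _ :
      (0:ℝ) ≤ x ⬝ᵥ x) with h | h
    · exact h
    · exact absurd (dotProduct_self_eq_zero.mp h.symm) hxne
  have hqA : α i * (x ⬝ᵥ x) ≤ x ⬝ᵥ (A *ᵥ x) := by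
    have : x ⬝ᵥ (A *ᵥ x) = ∑ j, α (e₁ j) * c j ^ 2 := by
      rw [← hc]; exact quad_subfamily hu hAu he₁ c
    rw [this, hxx₁, Finset.mul_sum]
    exact Finset.sum_le_sum fun j _ => mul_le_mul_of_nonneg_right (hα (he₁le j)) (sq_nonneg _)
  have hqB : x ⬝ᵥ (B *ᵥ x) ≤ β i * (x ⬝ᵥ x) := by
    have : x ⬝ᵥ (B *ᵥ x) = ∑ k, β (e₂ k) * dd k ^ 2 := by
      rw [← hdd]; exact quad_subfamily hv hBv he₂ dd
    rw [this, hxx₂, Finset.mul_sum]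
    exact Finset.sum_le_sum fun k _ => mul_le_mul_of_nonneg_right (hβ (he₂ge k)) (sq_nonneg _)
  have := hqA.trans ((hAB x).trans hqB)
  exact le_of_mul_le_mul_right this hpos



lemma eigen_family (A : Matrix (Fin p) (Fin p) ℝ) (hA : A.IsHermitian) (σ : Equiv.Perm (Fin p)) :
    ∃ u : Fin p → Fin p → ℝ, (∀ j k, u j ⬝ᵥ u k = if j = k then 1 else 0) ∧
      ∀ j, A *ᵥ u j = hA.eigenvalues (σ j) • u j := by
  refine ⟨fun j => ⇑(hA.eigenvectorBasis (σ j)), ?_, fun j => hA.mulVec_eigenvectorBasis (σ j)⟩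
  intro j k
  have h := (orthonormal_iff_ite.mp hA.eigenvectorBasis.orthonormal) (σ j) (σ k)
  rw [EuclideanSpace.inner_eq_star_dotProduct] at h
  simpa [σ.injective.eq_iff, dotProduct, mul_comm] using h



lemma transpose_mul_self_posSemidef (K : Matrix (Fin p) (Fin p) ℝ) :
    (Kᵀ * K).PosSemidef := by
  have h := Matrix.posSemidef_conjTranspose_mul_self K
  have : Kᴴ = Kᵀ := by ext i j; simp [Matrix.conjTranspose_apply]
  rwa [this] at h

lemma self_mul_transpose_posSemidef (K : Matrix (Fin p) (Fin p) ℝ) :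
    (K * Kᵀ).PosSemidef := by
  have h := Matrix.posSemidef_self_mul_conjTranspose K
  have : Kᴴ = Kᵀ := by ext i j; simp [Matrix.conjTranspose_apply]
  rwa [this] at h

lemma psd_sandwich {A : Matrix (Fin p) (Fin p) ℝ} (hA : A.PosSemidef)
    (K : Matrix (Fin p) (Fin p) ℝ) : (K * A * Kᵀ).PosSemidef := by
  have h := hA.mul_mul_conjTranspose_same K
  have : Kᴴ = Kᵀ := by ext i j; simp [Matrix.conjTranspose_apply]
  rwa [this] at h

lemma woodbury (K C' : Matrix (Fin p) (Fin p) ℝ) (hC' : C'.PosDef) :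
    (1 - K * (C' + Kᵀ * K)⁻¹ * Kᵀ) * (1 + K * C'⁻¹ * Kᵀ) = 1 := by
  set C := C' + Kᵀ * K with hC
  have hCpd : C.PosDef := hC'.add_posSemidef (transpose_mul_self_posSemidef K)
  have hCi : C⁻¹ * C = 1 :=
    Matrix.nonsing_inv_mul _ ((Matrix.isUnit_iff_isUnit_det _).mp hCpd.isUnit)
  have hC'i : C' * C'⁻¹ = 1 :=
    Matrix.mul_nonsing_inv _ ((Matrix.isUnit_iff_isUnit_det _).mp hC'.isUnit)
  have key : C'⁻¹ = C⁻¹ + C⁻¹ * (Kᵀ * K) * C'⁻¹ := by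
    calc C'⁻¹ = (C⁻¹ * C) * C'⁻¹ := by rw [hCi, one_mul]
      _ = C⁻¹ * (C' * C'⁻¹) + C⁻¹ * (Kᵀ * K) * C'⁻¹ := by
          rw [hC]; noncomm_ring
      _ = C⁻¹ + C⁻¹ * (Kᵀ * K) * C'⁻¹ := by rw [hC'i, mul_one]
  have expand : (1 - K * C⁻¹ * Kᵀ) * (1 + K * C'⁻¹ * Kᵀ)
      = 1 + (K * C'⁻¹ * Kᵀ - (K * C⁻¹ * Kᵀ + K * (C⁻¹ * (Kᵀ * K) * C'⁻¹) * Kᵀ)) := by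
    noncomm_ring
  have collapse : K * C⁻¹ * Kᵀ + K * (C⁻¹ * (Kᵀ * K) * C'⁻¹) * Kᵀ = K * C'⁻¹ * Kᵀ := by
    conv_rhs => rw [key]
    noncomm_ring
  rw [expand, collapse]
  simp


lemma step (K M : Matrix (Fin p) (Fin p) ℝ) (hM : (1 - M).PosDef) :
    (1 - K * (1 + Kᵀ * K - M)⁻¹ * Kᵀ)⁻¹ = 1 + K * (1 - M)⁻¹ * Kᵀ ∧
      (1 - K * (1 + Kᵀ * K - M)⁻¹ * Kᵀ).PosDef := by
  have hCeq : 1 + Kᵀ * K - M = (1 - M) + Kᵀ * K := by abel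
  have hw := woodbury K (1 - M) hM
  rw [← hCeq] at hw
  have hN : (1 + K * (1 - M)⁻¹ * Kᵀ).PosDef :=
    Matrix.PosDef.one.add_posSemidef (psd_sandwich hM.inv.posSemidef K)
  refine ⟨Matrix.inv_eq_right_inv hw, ?_⟩
  have h2 : (1 + K * (1 - M)⁻¹ * Kᵀ)⁻¹ = 1 - K * (1 + Kᵀ * K - M)⁻¹ * Kᵀ :=
    Matrix.inv_eq_left_inv hw
  exact h2 ▸ hN.inv

lemma dot_sandwich (K A : Matrix (Fin p) (Fin p) ℝ) (x : Fin p → ℝ) :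
    x ⬝ᵥ ((K * A * Kᵀ) *ᵥ x) = (Kᵀ *ᵥ x) ⬝ᵥ (A *ᵥ (Kᵀ *ᵥ x)) := by
  rw [← Matrix.mulVec_mulVec, ← Matrix.mulVec_mulVec, Matrix.dotProduct_mulVec]
  congr 1
  rw [← Matrix.transpose_transpose K, Matrix.vecMul_transpose, Matrix.transpose_transpose]

lemma mrec_nonneg (p : ℕ) (hp : 0 < p) (dsv : ℕ → Fin p → ℝ)
    (h : ∀ ℓ i, 0 ≤ dsv ℓ i) : ∀ k i, 0 ≤ mrec p hp dsv k i := by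
  intro k
  induction k with
  | zero => intro i; simp [mrec]
  | succ n ih =>
      intro i
      have h1 := ih ⟨0, hp⟩
      have h2 : (0:ℝ) ≤ dsv (n+1) i ^ 2 := sq_nonneg _
      simp only [mrec]
      nlinarith

lemma invariant (p : ℕ) (hp : 0 < p) (W : ℕ → Matrix (Fin p) (Fin p) ℝ)
    (dsv : ℕ → Fin p → ℝ)
    (hdsv_nonneg : ∀ ℓ i, 0 ≤ dsv ℓ i) (hdsv_anti : ∀ ℓ, Antitone (dsv ℓ))
    (hHerm : ∀ ℓ, (W ℓ * (W ℓ)ᵀ).IsHermitian)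
    (hdsv : ∀ ℓ, ∃ σ : Equiv.Perm (Fin p), ∀ i, dsv ℓ i ^ 2 = (hHerm ℓ).eigenvalues (σ i)) :
    ∀ ℓ, (1 - Mrec p W ℓ).PosDef ∧
      ∀ x : Fin p → ℝ, x ⬝ᵥ ((1 - Mrec p W ℓ)⁻¹ *ᵥ x)
        ≤ (mrec p hp dsv ℓ ⟨0, hp⟩ + 1) * (x ⬝ᵥ x) := by
  intro ℓ
  induction ℓ with
  | zero =>
      constructor
      · simpa [Mrec] using (Matrix.PosDef.one :
          (1 : Matrix (Fin p) (Fin p) ℝ).PosDef)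
      · intro x
        simp [Mrec, mrec]
  | succ k ih =>
      obtain ⟨ihPD, ihQ⟩ := ih
      set K := W (k + 1) with hK
      have hMrec : Mrec p W (k + 1) = K * (1 + Kᵀ * K - Mrec p W k)⁻¹ * Kᵀ := rfl
      obtain ⟨hinv, hPD⟩ := step K (Mrec p W k) ihPD
      rw [← hMrec] at hinv hPD
      refine ⟨hPD, fun x => ?_⟩
      rw [hinv]
      -- quadratic form bound
      have hy : x ⬝ᵥ ((K * (1 - Mrec p W k)⁻¹ * Kᵀ) *ᵥ x)
          ≤ (mrec p hp dsv k ⟨0, hp⟩ + 1) * ((Kᵀ *ᵥ x) ⬝ᵥ (Kᵀ *ᵥ x)) := by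
        rw [dot_sandwich]; exact ihQ (Kᵀ *ᵥ x)
      have hyy : (Kᵀ *ᵥ x) ⬝ᵥ (Kᵀ *ᵥ x) = x ⬝ᵥ ((K * Kᵀ) *ᵥ x) := by
        have := dot_sandwich K 1 x
        simpa using this.symm
      -- Rayleigh bound for K * Kᵀ
      obtain ⟨σ, hσ⟩ := hdsv (k + 1)
      obtain ⟨v, hvON, hv⟩ := eigen_family _ (hHerm (k + 1)) σ
      have hKK : x ⬝ᵥ ((K * Kᵀ) *ᵥ x) ≤ dsv (k + 1) ⟨0, hp⟩ ^ 2 * (x ⬝ᵥ x) := by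
        refine quad_le hvON (fun j => by rw [hv j, ← hσ j]) (fun j => ?_) x
        have h0 : (⟨0, hp⟩ : Fin p) ≤ j := by simp [Fin.le_def]
        have := hdsv_anti (k + 1) h0
        exact pow_le_pow_left₀ (hdsv_nonneg _ _) this 2
      have hxx : (0:ℝ) ≤ x ⬝ᵥ x := Finset.sum_nonneg fun j _ => mul_self_nonneg _
      have hc : (0:ℝ) ≤ mrec p hp dsv k ⟨0, hp⟩ + 1 := by
        have := mrec_nonneg p hp dsv hdsv_nonneg k ⟨0, hp⟩; linarith
      have hxKK : (0:ℝ) ≤ x ⬝ᵥ ((K * Kᵀ) *ᵥ x) := by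
        simpa using (self_mul_transpose_posSemidef K).dotProduct_mulVec_nonneg x
      rw [Matrix.add_mulVec, Matrix.one_mulVec, dotProduct_add]
      have : x ⬝ᵥ ((K * (1 - Mrec p W k)⁻¹ * Kᵀ) *ᵥ x)
          ≤ (mrec p hp dsv k ⟨0, hp⟩ + 1) * (dsv (k + 1) ⟨0, hp⟩ ^ 2 * (x ⬝ᵥ x)) := by
        calc x ⬝ᵥ ((K * (1 - Mrec p W k)⁻¹ * Kᵀ) *ᵥ x)
            ≤ (mrec p hp dsv k ⟨0, hp⟩ + 1) * ((Kᵀ *ᵥ x) ⬝ᵥ (Kᵀ *ᵥ x)) := hy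
          _ ≤ (mrec p hp dsv k ⟨0, hp⟩ + 1) * (dsv (k + 1) ⟨0, hp⟩ ^ 2 * (x ⬝ᵥ x)) := by
              rw [hyy]; exact mul_le_mul_of_nonneg_left hKK hc
      simp only [mrec]
      nlinarith [this]

end EigProof

/-- For every `d ≥ 1` and `i ≤ r`, the `i`-th largest eigenvalue of `(I_p - M_d)⁻¹` is at
most `m_{d,i} + 1`; consequently `Tr((I_p - M_d)⁻¹) ≤ p + ∑_{i=1}^r m_{d,i}`. -/
theorem eigenvalue_bound_Mrec
    (p : ℕ) (hp : 0 < p) (d r : ℕ) (hd : 1 ≤ d)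
    (W : ℕ → Matrix (Fin p) (Fin p) ℝ)
    (hrank : ∀ ℓ, 1 ≤ ℓ → ℓ ≤ d → (W ℓ).rank = r)
    -- the singular values of each `W_ℓ`, in decreasing order
    (dsv : ℕ → Fin p → ℝ)
    (hdsv_nonneg : ∀ ℓ i, 0 ≤ dsv ℓ i) (hdsv_anti : ∀ ℓ, Antitone (dsv ℓ))
    (hHerm : ∀ ℓ, (W ℓ * (W ℓ)ᵀ).IsHermitian)
    (hdsv : ∀ ℓ, ∃ σ : Equiv.Perm (Fin p), ∀ i, dsv ℓ i ^ 2 = (hHerm ℓ).eigenvalues (σ i))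
    -- the eigenvalues of `(I - M_d)⁻¹`, in decreasing order
    (hA : ((1 - Mrec p W d)⁻¹).IsHermitian)
    (lam : Fin p → ℝ) (hlam_anti : Antitone lam)
    (hlam : ∃ σ : Equiv.Perm (Fin p), ∀ i, lam i = hA.eigenvalues (σ i)) :
    (∀ i : Fin p, (i : ℕ) < r → lam i ≤ mrec p hp dsv d i + 1) ∧
      Matrix.trace (1 - Mrec p W d)⁻¹ ≤
        (p : ℝ) + ∑ i ∈ Finset.univ.filter (fun i : Fin p => (i : ℕ) < r),
          mrec p hp dsv d i := by
  classical
  open EigProof in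
  obtain ⟨k, rfl⟩ : ∃ k, d = k + 1 := ⟨d - 1, by omega⟩
  set K := W (k + 1) with hKdef
  obtain ⟨ihPD, ihQ⟩ := invariant p hp W dsv hdsv_nonneg hdsv_anti hHerm hdsv k
  set c : ℝ := mrec p hp dsv k ⟨0, hp⟩ + 1 with hcdef
  have hc : (0:ℝ) ≤ c := by
    have := mrec_nonneg p hp dsv hdsv_nonneg k ⟨0, hp⟩; simp only [hcdef]; linarith
  have hMrec : Mrec p W (k + 1) = K * (1 + Kᵀ * K - Mrec p W k)⁻¹ * Kᵀ := rfl
  obtain ⟨hinv, hPD⟩ := step K (Mrec p W k) ihPD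
  rw [← hMrec] at hinv hPD
  -- the comparison matrix
  set B : Matrix (Fin p) (Fin p) ℝ := 1 + c • (K * Kᵀ) with hBdef
  -- eigen families
  obtain ⟨σA, hσA⟩ := hlam
  obtain ⟨u, huON, hu⟩ := eigen_family _ hA σA
  have hAu : ∀ j, (1 - Mrec p W (k + 1))⁻¹ *ᵥ u j = lam j • u j := by
    intro j; rw [hu j, ← hσA j]
  obtain ⟨σ, hσ⟩ := hdsv (k + 1)
  obtain ⟨v, hvON, hv⟩ := eigen_family _ (hHerm (k + 1)) σ
  set β : Fin p → ℝ := fun j => mrec p hp dsv (k + 1) j + 1 with hβdef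
  have hβ_eq : ∀ j, β j = dsv (k + 1) j ^ 2 * c + 1 := fun j => rfl
  have hBv : ∀ j, B *ᵥ v j = β j • v j := by
    intro j
    rw [hBdef, Matrix.add_mulVec, Matrix.one_mulVec, Matrix.smul_mulVec, hv j, ← hσ j,
      hβ_eq]
    module
  have hβ_anti : Antitone β := by
    intro a b hab
    rw [hβ_eq, hβ_eq]
    have := hdsv_anti (k + 1) hab
    have h2 := pow_le_pow_left₀ (hdsv_nonneg (k + 1) b) this 2
    nlinarith
  -- quadratic form comparison
  have hAB : ∀ x : Fin p → ℝ,
      x ⬝ᵥ ((1 - Mrec p W (k + 1))⁻¹ *ᵥ x) ≤ x ⬝ᵥ (B *ᵥ x) := by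
    intro x
    rw [hinv, hBdef]
    rw [Matrix.add_mulVec, Matrix.one_mulVec, dotProduct_add,
      Matrix.add_mulVec, Matrix.one_mulVec, dotProduct_add]
    have h1 : x ⬝ᵥ ((K * (1 - Mrec p W k)⁻¹ * Kᵀ) *ᵥ x)
        ≤ c * ((Kᵀ *ᵥ x) ⬝ᵥ (Kᵀ *ᵥ x)) := by
      rw [dot_sandwich]; exact ihQ (Kᵀ *ᵥ x)
    have hyy : (Kᵀ *ᵥ x) ⬝ᵥ (Kᵀ *ᵥ x) = x ⬝ᵥ ((K * Kᵀ) *ᵥ x) := by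
      have := dot_sandwich K 1 x
      simpa using this.symm
    have h2 : x ⬝ᵥ ((c • (K * Kᵀ)) *ᵥ x) = c * (x ⬝ᵥ ((K * Kᵀ) *ᵥ x)) := by
      rw [Matrix.smul_mulVec, dotProduct_smul, smul_eq_mul]
    rw [h2]
    rw [hyy] at h1
    linarith
  have hmain : ∀ i : Fin p, lam i ≤ mrec p hp dsv (k + 1) i + 1 := by
    intro i
    exact eig_mono huON hvON hAu hBv hlam_anti hβ_anti hAB i
  refine ⟨fun i _ => hmain i, ?_⟩
  -- dsv vanishes past the rank
  have hdsv_zero : ∀ j : Fin p, r ≤ (j : ℕ) → dsv (k + 1) j = 0 := by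
    intro j hj
    by_contra hne
    have hpos : 0 < dsv (k + 1) j := lt_of_le_of_ne (hdsv_nonneg _ _) (Ne.symm hne)
    have hcard : (W (k + 1) * (W (k + 1))ᵀ).rank
        = Fintype.card {i // (hHerm (k + 1)).eigenvalues i ≠ 0} :=
      (hHerm (k + 1)).rank_eq_card_non_zero_eigs
    have hrk : (W (k + 1) * (W (k + 1))ᵀ).rank = r := by
      rw [Matrix.rank_self_mul_transpose]
      exact hrank (k + 1) (by omega) le_rfl
    have hsubset : (Finset.Iic j).image σ ⊆
        Finset.univ.filter (fun i => (hHerm (k + 1)).eigenvalues i ≠ 0) := by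
      intro a ha
      obtain ⟨b, hb, rfl⟩ := Finset.mem_image.mp ha
      rw [Finset.mem_filter]
      refine ⟨Finset.mem_univ _, ?_⟩
      rw [← hσ b]
      have hble : b ≤ j := Finset.mem_Iic.mp hb
      have : dsv (k + 1) j ≤ dsv (k + 1) b := hdsv_anti (k + 1) hble
      exact (pow_pos (lt_of_lt_of_le hpos this) 2).ne'
    have hcard2 : ((Finset.Iic j).image σ).card = (j : ℕ) + 1 := by
      rw [Finset.card_image_of_injective _ σ.injective, Fin.card_Iic]
    have hcard3 : (Finset.univ.filter
        (fun i => (hHerm (k + 1)).eigenvalues i ≠ 0)).card = r := by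
      rw [← Fintype.card_subtype, ← hcard, hrk]
    have := Finset.card_le_card hsubset
    omega
  -- trace computation
  have htrace : Matrix.trace (1 - Mrec p W (k + 1))⁻¹ = ∑ j, lam j := by
    rw [trace_eq huON hAu]
  rw [htrace]
  have hsplit : ∑ j, lam j
      = ∑ j ∈ Finset.univ.filter (fun i : Fin p => (i : ℕ) < r), lam j
        + ∑ j ∈ Finset.univ.filter (fun i : Fin p => ¬ (i : ℕ) < r), lam j :=
    (Finset.sum_filter_add_sum_filter_not _ _ _).symm
  rw [hsplit]
  have hb1 : ∑ j ∈ Finset.univ.filter (fun i : Fin p => (i : ℕ) < r), lam j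
      ≤ ∑ j ∈ Finset.univ.filter (fun i : Fin p => (i : ℕ) < r),
          (mrec p hp dsv (k + 1) j + 1) :=
    Finset.sum_le_sum fun j _ => hmain j
  have hb2 : ∑ j ∈ Finset.univ.filter (fun i : Fin p => ¬ (i : ℕ) < r), lam j
      ≤ ∑ j ∈ Finset.univ.filter (fun i : Fin p => ¬ (i : ℕ) < r), (1:ℝ) := by
    refine Finset.sum_le_sum fun j hj => ?_
    have hj' : r ≤ (j : ℕ) := by
      have := (Finset.mem_filter.mp hj).2; omega
    have := hmain j
    have hz : mrec p hp dsv (k + 1) j = 0 := by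
      show dsv (k + 1) j ^ 2 * (mrec p hp dsv k ⟨0, hp⟩ + 1) = 0
      rw [hdsv_zero j hj']
      ring
    rw [hz] at this
    linarith
  have hcards : (Finset.univ.filter (fun i : Fin p => (i : ℕ) < r)).card
      + (Finset.univ.filter (fun i : Fin p => ¬ (i : ℕ) < r)).card = p := by
    rw [Finset.card_filter_add_card_filter_not]
    simp
  have e1 : ∑ j ∈ Finset.univ.filter (fun i : Fin p => (i : ℕ) < r),
      (mrec p hp dsv (k + 1) j + 1)
      = (∑ j ∈ Finset.univ.filter (fun i : Fin p => (i : ℕ) < r),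
          mrec p hp dsv (k + 1) j)
        + (Finset.univ.filter (fun i : Fin p => (i : ℕ) < r)).card := by
    rw [Finset.sum_add_distrib, Finset.sum_const, nsmul_eq_mul, mul_one]
  have e2 : ∑ j ∈ Finset.univ.filter (fun i : Fin p => ¬ (i : ℕ) < r), (1:ℝ)
      = (Finset.univ.filter (fun i : Fin p => ¬ (i : ℕ) < r)).card := by
    rw [Finset.sum_const, nsmul_eq_mul, mul_one]
  have hcast : ((Finset.univ.filter (fun i : Fin p => (i : ℕ) < r)).card : ℝ)
      + ((Finset.univ.filter (fun i : Fin p => ¬ (i : ℕ) < r)).card : ℝ) = (p : ℝ) := by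
    rw [← Nat.cast_add, hcards]
  calc ∑ j ∈ Finset.univ.filter (fun i : Fin p => (i : ℕ) < r), lam j
        + ∑ j ∈ Finset.univ.filter (fun i : Fin p => ¬ (i : ℕ) < r), lam j
      ≤ (∑ j ∈ Finset.univ.filter (fun i : Fin p => (i : ℕ) < r),
          (mrec p hp dsv (k + 1) j + 1))
        + ∑ j ∈ Finset.univ.filter (fun i : Fin p => ¬ (i : ℕ) < r), (1:ℝ) := by
        exact add_le_add hb1 hb2
    _ = (p : ℝ) + ∑ i ∈ Finset.univ.filter (fun i : Fin p => (i : ℕ) < r),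
          mrec p hp dsv (k + 1) i := by
        rw [e1, e2]
        linarith [hcast]
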